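/- Let f : ℝ^d → ℝ be differentiable with L-Lipschitz gradient, let 0 < σ ≤ L, and set κ = L/σ and ω = (√κ − 1)/(√κ + 1). Define iterates by x₀ = y₀ and, for t ≥ 1, y_t = x_{t−1} − (1/L)∇f(x_{t−1}) and x_t = y_t + ω(y_t − y_{t−1}). Fix w ∈ ℝ^d and t ≥ 1. If for every s = 0, 1, …, t−1 the inequality f(u) ≥ f(x_s) + ∇f(x_s)ᵀ(u − x_s) + (σ/2)‖u − x_s‖² holds for both u = w and u = y_s, then f(y_t) − f(w) ≤ (1 − 1/√κ)^t · ψ(w), where ψ(w) = f(y₀) − f(w) + (σ/2)‖w − y₀‖². -/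

import Mathlib

open scoped InnerProductSpace

section Aux

variable {E : Type*} [NormedAddCommGroup E] [InnerProductSpace ℝ E] [CompleteSpace E]

lemma agd_descent_lemma (f : E → ℝ) (g : E → E)  (L : ℝ)
    (hgrad : ∀ x, HasGradientAt f (g x) x)
    (hlip : ∀ x y, ‖g x - g y‖ ≤ L * ‖x - y‖) (a b : E) :
    f b ≤ f a + ⟪g a, b - a⟫_ℝ + L / 2 * ‖b - a‖ ^ 2 := by
  set v := b - a with hv
  set h : ℝ → ℝ := fun θ => f (a + θ • v) - θ * ⟪g a, v⟫_ℝ - L * θ ^ 2 / 2 * ‖v‖ ^ 2 with hh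
  have hpath : ∀ θ : ℝ, HasDerivAt (fun θ : ℝ => a + θ • v) v θ := by
    intro θ
    simpa using ((hasDerivAt_id θ).smul_const v).const_add a
  have hderiv : ∀ θ : ℝ, HasDerivAt h
      (⟪g (a + θ • v), v⟫_ℝ - ⟪g a, v⟫_ℝ - L * θ * ‖v‖ ^ 2) θ := by
    intro θ
    have h1 : HasDerivAt (fun θ : ℝ => f (a + θ • v)) ⟪g (a + θ • v), v⟫_ℝ θ := by
      have := (hgrad (a + θ • v)).hasFDerivAt.comp_hasDerivAt θ (hpath θ)
      simp at this
      exact this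
    have h2 : HasDerivAt (fun θ : ℝ => θ * ⟪g a, v⟫_ℝ) ⟪g a, v⟫_ℝ θ := by
      simpa using (hasDerivAt_id θ).mul_const ⟪g a, v⟫_ℝ
    have h3 : HasDerivAt (fun θ : ℝ => L * θ ^ 2 / 2 * ‖v‖ ^ 2) (L * θ * ‖v‖ ^ 2) θ := by
      have := (hasDerivAt_pow 2 θ).const_mul L
      have := (this.div_const 2).mul_const (‖v‖ ^ 2)
      refine this.congr_deriv ?_
      ring
    exact (h1.sub h2).sub h3
  have hmono : AntitoneOn h (Set.Icc (0:ℝ) 1) := by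
    apply antitoneOn_of_deriv_nonpos (convex_Icc 0 1)
    · exact Continuous.continuousOn
        (continuous_iff_continuousAt.2 fun θ => (hderiv θ).differentiableAt.continuousAt)
    · intro θ _
      exact (hderiv θ).differentiableAt.differentiableWithinAt
    · intro θ hθ
      rw [interior_Icc] at hθ
      rw [(hderiv θ).deriv]
      have hnn : ⟪g (a + θ • v) - g a, v⟫_ℝ ≤ L * θ * ‖v‖ ^ 2 := by
        calc ⟪g (a + θ • v) - g a, v⟫_ℝ ≤ ‖g (a + θ • v) - g a‖ * ‖v‖ :=
              real_inner_le_norm _ _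
          _ ≤ (L * ‖(a + θ • v) - a‖) * ‖v‖ := by
              gcongr; exact hlip _ _
          _ = L * θ * ‖v‖ ^ 2 := by
              rw [add_sub_cancel_left, norm_smul, Real.norm_eq_abs,
                abs_of_pos hθ.1]; ring
      have := inner_sub_left (𝕜 := ℝ) (g (a + θ • v)) (g a) v
      linarith [hnn, this.symm.le, this.le]
  have h01 : h 1 ≤ h 0 :=
    hmono (Set.mem_Icc.2 ⟨le_refl 0, zero_le_one⟩)
      (Set.mem_Icc.2 ⟨zero_le_one, le_refl 1⟩) zero_le_one
  simp only [hh] at h01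
  simp only [one_smul, zero_smul, add_zero, one_pow, zero_pow] at h01
  have : a + v = b := by rw [hv]; abel
  rw [this] at h01
  linarith

lemma agd_combo_sq (τ : ℝ) (A B : E) :
    ‖(1 - τ) • A + τ • B‖ ^ 2 =
      (1 - τ) * ‖A‖ ^ 2 + τ * ‖B‖ ^ 2 - τ * (1 - τ) * ‖A - B‖ ^ 2 := by
  have hn : ∀ v : E, ‖v‖ ^ 2 = ⟪v, v⟫_ℝ := fun v => (real_inner_self_eq_norm_sq v).symm
  simp only [hn, inner_add_add_self, inner_sub_sub_self, real_inner_smul_left,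
    real_inner_smul_right, real_inner_comm A B]
  ring

lemma agd_expand_sq (c : ℝ) (X G : E) :
    ‖X - c • G‖ ^ 2 = ‖X‖ ^ 2 - 2 * c * ⟪G, X⟫_ℝ + c ^ 2 * ‖G‖ ^ 2 := by
  have hn : ∀ v : E, ‖v‖ ^ 2 = ⟪v, v⟫_ℝ := fun v => (real_inner_self_eq_norm_sq v).symm
  simp only [hn, inner_sub_sub_self, real_inner_smul_left, real_inner_smul_right,
    real_inner_comm X G]
  ring

lemma agd_expand_sq2 (c d : ℝ) (u v : E) :
    ‖c • u + d • v‖ ^ 2 =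
      c ^ 2 * ‖u‖ ^ 2 + 2 * c * d * ⟪u, v⟫_ℝ + d ^ 2 * ‖v‖ ^ 2 := by
  have hn : ∀ w : E, ‖w‖ ^ 2 = ⟪w, w⟫_ℝ := fun w => (real_inner_self_eq_norm_sq w).symm
  simp only [hn, inner_add_add_self, real_inner_smul_left, real_inner_smul_right,
    real_inner_comm u v]
  ring

end Aux

set_option maxHeartbeats 1600000 in
/-- Proposition 1 (AGD convergence under local strong-convexity inequalities). -/
theorem agd_until_proven_guilty_convergence
    {d : ℕ} (f : EuclideanSpace ℝ (Fin d) → ℝ)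
    (g : EuclideanSpace ℝ (Fin d) → EuclideanSpace ℝ (Fin d))
    (L σ : ℝ) (hσ : 0 < σ) (hσL : σ ≤ L)
    (hgrad : ∀ x, HasGradientAt f (g x) x)
    (hlip : ∀ x y, ‖g x - g y‖ ≤ L * ‖x - y‖)
    (κ ω : ℝ) (hκ : κ = L / σ)
    (hω : ω = (Real.sqrt κ - 1) / (Real.sqrt κ + 1))
    (x y : ℕ → EuclideanSpace ℝ (Fin d))
    (hx0 : x 0 = y 0)
    (hy : ∀ t : ℕ, y (t + 1) = x t - (1 / L) • g (x t))
    (hx : ∀ t : ℕ, x (t + 1) = y (t + 1) + ω • (y (t + 1) - y t))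
    (w : EuclideanSpace ℝ (Fin d)) (t : ℕ) (ht : 1 ≤ t)
    (hconv : ∀ s, s < t → ∀ u ∈ ({w, y s} : Set (EuclideanSpace ℝ (Fin d))),
      f u ≥ f (x s) + ⟪g (x s), u - x s⟫_ℝ + σ / 2 * ‖u - x s‖ ^ 2) :
    f (y t) - f w ≤ (1 - 1 / Real.sqrt κ) ^ t *
      (f (y 0) - f w + σ / 2 * ‖w - y 0‖ ^ 2) := by
  have hL : 0 < L := lt_of_lt_of_le hσ hσL
  set sk := Real.sqrt κ with hskdef
  have hκ1 : 1 ≤ κ := by rw [hκ]; exact (one_le_div hσ).2 hσL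
  have hsk1 : 1 ≤ sk := by
    rw [hskdef, show (1:ℝ) = Real.sqrt 1 by simp]
    exact Real.sqrt_le_sqrt hκ1
  have hsk0 : 0 < sk := lt_of_lt_of_le one_pos hsk1
  have hsksq : sk ^ 2 = κ := Real.sq_sqrt (le_trans zero_le_one hκ1)
  have hLval : L = σ * sk ^ 2 := by
    rw [hsksq, hκ]; field_simp
  have hτ1 : 1 / sk ≤ 1 := by
    rw [div_le_one hsk0]; exact hsk1
  have hτ0 : 0 < 1 / sk := by positivity
  -- the auxiliary sequence and the potential
  set z : ℕ → EuclideanSpace ℝ (Fin d) := fun s => x s + sk • (x s - y s) with hzdef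
  set V : ℕ → ℝ := fun s => f (y s) - f w + σ / 2 * ‖z s - w‖ ^ 2 with hVdef
  have hstep : ∀ s, s < t → V (s + 1) ≤ (1 - 1 / sk) * V s := by
    intro s hs
    -- strong convexity inequalities
    have hB := hconv s hs w (by simp)
    have hC := hconv s hs (y s) (by simp)
    -- descent lemma
    have hA : f (y (s + 1)) ≤ f (x s) - (1 / sk) ^ 2 / (2 * σ) * ‖g (x s)‖ ^ 2 := by
      have h0 := agd_descent_lemma f g L hgrad hlip (x s) (y (s + 1))
      have h1 : y (s + 1) - x s = -((1 / L) • g (x s)) := by rw [hy s]; abel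
      rw [h1] at h0
      rw [inner_neg_right, inner_smul_right, real_inner_self_eq_norm_sq, norm_neg,
        norm_smul, Real.norm_eq_abs, abs_of_pos (by positivity : (0:ℝ) < 1 / L)] at h0
      have hLne : L ≠ 0 := ne_of_gt hL
      have hskne : sk ≠ 0 := ne_of_gt hsk0
      have hσne : σ ≠ 0 := ne_of_gt hσ
      calc f (y (s + 1)) ≤ f (x s) - 1 / L * ‖g (x s)‖ ^ 2 +
            L / 2 * (1 / L * ‖g (x s)‖) ^ 2 := by linarith
        _ = f (x s) - (1 / sk) ^ 2 / (2 * σ) * ‖g (x s)‖ ^ 2 := by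
            rw [hLval]; field_simp; ring
    -- the key vector identity
    have hskne : sk ≠ 0 := ne_of_gt hsk0
    have hσne : σ ≠ 0 := ne_of_gt hσ
    have hsk1ne : sk + 1 ≠ 0 := by positivity
    have hz2 : z (s + 1) =
        (1 - 1 / sk) • z s + (1 / sk) • (x s - (1 / σ) • g (x s)) := by
      show x (s + 1) + sk • (x (s + 1) - y (s + 1)) =
        (1 - 1 / sk) • (x s + sk • (x s - y s)) + (1 / sk) • (x s - (1 / σ) • g (x s))
      rw [hx s, hy s, hω, hLval]
      match_scalars <;> field_simp <;> ring
    have hZ : z (s + 1) - w =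
        (1 - 1 / sk) • (z s - w) + (1 / sk) • ((x s - (1 / σ) • g (x s)) - w) := by
      rw [hz2]; match_scalars <;> field_simp <;> ring
    -- norm expansion
    have hn2 : ‖z (s + 1) - w‖ ^ 2 =
        (1 - 1 / sk) * ‖z s - w‖ ^ 2
        + (1 / sk) * ‖(x s - (1 / σ) • g (x s)) - w‖ ^ 2
        - (1 / sk) * (1 - 1 / sk) * ‖(z s - w) - ((x s - (1 / σ) • g (x s)) - w)‖ ^ 2 := by
      rw [hZ, agd_combo_sq]
    have he1 : ‖(x s - (1 / σ) • g (x s)) - w‖ ^ 2 =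
        ‖x s - w‖ ^ 2 - 2 * (1 / σ) * ⟪g (x s), x s - w⟫_ℝ + (1 / σ) ^ 2 * ‖g (x s)‖ ^ 2 := by
      have : (x s - (1 / σ) • g (x s)) - w = (x s - w) - (1 / σ) • g (x s) := by abel
      rw [this, agd_expand_sq]
    have he2 : ‖(z s - w) - ((x s - (1 / σ) • g (x s)) - w)‖ ^ 2 =
        sk ^ 2 * ‖x s - y s‖ ^ 2 + 2 * sk * (1 / σ) * ⟪x s - y s, g (x s)⟫_ℝ
        + (1 / σ) ^ 2 * ‖g (x s)‖ ^ 2 := by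
      have : (z s - w) - ((x s - (1 / σ) • g (x s)) - w) =
          sk • (x s - y s) + (1 / σ) • g (x s) := by
        show (x s + sk • (x s - y s)) - w - ((x s - (1 / σ) • g (x s)) - w) = _
        abel
      rw [this, agd_expand_sq2]
    -- bridge the inner products
    have hi1 : ⟪g (x s), w - x s⟫_ℝ = -⟪g (x s), x s - w⟫_ℝ := by
      rw [← inner_neg_right]; congr 1; abel
    have hi2 : ⟪g (x s), y s - x s⟫_ℝ = -⟪x s - y s, g (x s)⟫_ℝ := by
      rw [real_inner_comm, ← inner_neg_left]; congr 1; abel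
    have hq1 : ‖w - x s‖ ^ 2 = ‖x s - w‖ ^ 2 := by rw [norm_sub_rev]
    have hq2 : ‖y s - x s‖ ^ 2 = ‖x s - y s‖ ^ 2 := by rw [norm_sub_rev]
    rw [hi1, hq1] at hB
    rw [hi2, hq2] at hC
    -- scalar abbreviations
    set a := f (x s)
    set b := f (y s)
    set b' := f (y (s + 1))
    set c := f w
    set p := ‖g (x s)‖ ^ 2
    set q := ‖x s - w‖ ^ 2
    set r := ‖x s - y s‖ ^ 2
    set i1 := ⟪g (x s), x s - w⟫_ℝ
    set i2 := ⟪x s - y s, g (x s)⟫_ℝ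
    set n1 := ‖z s - w‖ ^ 2
    set n2 := ‖z (s + 1) - w‖ ^ 2
    have hp : (0:ℝ) ≤ p := by positivity
    have hr : (0:ℝ) ≤ r := by positivity
    -- the simplified potential identity
    have heq : σ / 2 * n2 = (1 - 1 / sk) * (σ / 2) * n1
        + (1 / sk) * (σ / 2) * q - (1 / sk) * i1 + (1 / sk) ^ 2 / (2 * σ) * p
        - (1 - 1 / sk) * (σ * sk / 2) * r - (1 - 1 / sk) * i2 := by
      rw [hn2, he1, he2]; field_simp; ring
    -- scaled strong-convexity inequalities
    have hB' : (1 / sk) * (a + (-i1) + σ / 2 * q) ≤ (1 / sk) * c :=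
      mul_le_mul_of_nonneg_left hB (le_of_lt hτ0)
    have hC' : (1 - 1 / sk) * (a + (-i2) + σ / 2 * r) ≤ (1 - 1 / sk) * b :=
      mul_le_mul_of_nonneg_left hC (by linarith)
    have hr' : (0:ℝ) ≤ (1 - 1 / sk) * (σ * (sk - 1) / 2) * r := by
      apply mul_nonneg
      apply mul_nonneg
      · linarith
      · have : (0:ℝ) ≤ sk - 1 := by linarith
        positivity
      · exact hr
    have hr2 : (0:ℝ) ≤ (1 - 1 / sk) * σ * r := by
      apply mul_nonneg (mul_nonneg (by linarith) (le_of_lt hσ)) hr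
    show b' - c + σ / 2 * n2 ≤ (1 - 1 / sk) * (b - c + σ / 2 * n1)
    linarith [hA, hB', hC', hr', hr2, heq]
  -- iterate the step
  have hnonneg : (0:ℝ) ≤ 1 - 1 / sk := by linarith
  have hiter : ∀ s, s ≤ t → V s ≤ (1 - 1 / sk) ^ s * V 0 := by
    intro s
    induction s with
    | zero => intro _; simp
    | succ n ih =>
      intro h
      calc V (n + 1) ≤ (1 - 1 / sk) * V n := hstep n (by omega)
        _ ≤ (1 - 1 / sk) * ((1 - 1 / sk) ^ n * V 0) :=
            mul_le_mul_of_nonneg_left (ih (by omega)) hnonneg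
        _ = (1 - 1 / sk) ^ (n + 1) * V 0 := by ring
  have hV0 : V 0 = f (y 0) - f w + σ / 2 * ‖w - y 0‖ ^ 2 := by
    have hz0 : z 0 = y 0 := by
      show x 0 + sk • (x 0 - y 0) = y 0
      rw [hx0, sub_self, smul_zero, add_zero]
    show f (y 0) - f w + σ / 2 * ‖z 0 - w‖ ^ 2 = _
    rw [hz0, norm_sub_rev]
  have hVt : f (y t) - f w ≤ V t := by
    show f (y t) - f w ≤ f (y t) - f w + σ / 2 * ‖z t - w‖ ^ 2
    have : (0:ℝ) ≤ σ / 2 * ‖z t - w‖ ^ 2 := by positivity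
    linarith
  calc f (y t) - f w ≤ V t := hVt
    _ ≤ (1 - 1 / sk) ^ t * V 0 := hiter t le_rfl
    _ = (1 - 1 / sk) ^ t * (f (y 0) - f w + σ / 2 * ‖w - y 0‖ ^ 2) := by rw [hV0]
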